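/- arXiv:1804.06270 — 2 statements merged into one kernel-verified Lean document; each statement's English description precedes it below -/
import Mathlib

section
/- Let $I\subseteq\{0,\ldots,d\}$ with $0\notin I$. Then $\Diamond^d(\Gamma^d_I)=\{0\}*\pi(\Diamond^{d-1}(\Gamma^{d-1}_{I-1}))$, where $\pi$ is the vertex relabeling sending $i\mapsto i+1$ and $v_i\mapsto v_{i+1}$ for $0\le i\le d-1$, and $I-1=\{i-1: i\in I\}$. -/
namespace Paper

/-- Ambient vertex type in dimension `d`: original vertices `0,…,d+1` (left)
and new vertices `v_0,…,v_d` (right). -/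
abbrev V (d : ℕ) := Sum (Fin (d+2)) (Fin (d+1))

def origV (d m : ℕ) : V d := Sum.inl ⟨m % (d+2), Nat.mod_lt m (by omega)⟩
def newV (d m : ℕ) : V d := Sum.inr ⟨m % (d+1), Nat.mod_lt m (by omega)⟩

variable {W : Type*} [DecidableEq W] {W' : Type*} [DecidableEq W']

def IsComplex (Δ : Set (Finset W)) : Prop := ∀ F ∈ Δ, ∀ G, G ⊆ F → G ∈ Δ

def isFacet (Δ : Set (Finset W)) (F : Finset W) : Prop :=
  F ∈ Δ ∧ ∀ G ∈ Δ, F ⊆ G → G = F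

def simplexOn (A : Finset W) : Set (Finset W) := {F | F ⊆ A}

def bdrySimplex (A : Finset W) : Set (Finset W) := {F | F ⊂ A}

def joinC (Δ Γ : Set (Finset W)) : Set (Finset W) := {s | ∃ a ∈ Δ, ∃ b ∈ Γ, s = a ∪ b}

def lkC (Δ : Set (Finset W)) (F : Finset W) : Set (Finset W) :=
  {G | Disjoint F G ∧ F ∪ G ∈ Δ}

def delFace (Δ : Set (Finset W)) (F : Finset W) : Set (Finset W) := {G ∈ Δ | ¬ F ⊆ G}

/-- Stellar subdivision at `F` with new vertex `v`. -/
def sdC (v : W) (F : Finset W) (Δ : Set (Finset W)) : Set (Finset W) :=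
  delFace Δ F ∪ joinC (simplexOn {v}) (joinC (bdrySimplex F) (lkC Δ F))

/-- Deletion of a subcomplex: the complex generated by the facets of `Δ`
that are not facets of `Γ`. -/
def delSub (Δ Γ : Set (Finset W)) : Set (Finset W) :=
  {G | ∃ F, isFacet Δ F ∧ ¬ isFacet Γ F ∧ G ⊆ F}

def IsInduced (Γ Δ : Set (Finset W)) : Prop :=
  Γ ⊆ Δ ∧ ∀ F ∈ Δ, (∀ v ∈ F, ({v} : Finset W) ∈ Γ) → F ∈ Γ

/-- Simplicial isomorphism (via a permutation of the ambient vertex set). -/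
def IsoC (Δ Γ : Set (Finset W)) : Prop :=
  ∃ e : Equiv.Perm W, ∀ F : Finset W, F ∈ Δ ↔ F.image (⇑e) ∈ Γ

def mapC (f : W → W') (Δ : Set (Finset W)) : Set (Finset W') := {F | ∃ G ∈ Δ, F = G.image f}

/-- Number of faces of cardinality `i` (i.e. dimension `i-1`). -/
noncomputable def fnum (Δ : Set (Finset W)) (i : ℕ) : ℕ := {F | F ∈ Δ ∧ F.card = i}.ncard

/-- `h`-numbers of a `d`-dimensional complex. -/
noncomputable def hnum (d : ℕ) (Δ : Set (Finset W)) (j : ℕ) : ℤ :=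
  ∑ i ∈ Finset.range (j+1),
    (-1 : ℤ)^(j-i) * ((d+1-i).choose (d+1-j) : ℤ) * (fnum Δ i : ℤ)

/-- `R` is the restriction face of the `i`-th facet of the ordering `L`. -/
def IsRestriction (L : List (Finset W)) (i : ℕ) (R : Finset W) : Prop :=
  R ⊆ L.getD i ∅ ∧ (∀ j < i, ¬ R ⊆ L.getD j ∅) ∧
    ∀ G ⊆ L.getD i ∅, (∀ j < i, ¬ G ⊆ L.getD j ∅) → R ⊆ G

def IsShelling (Δ : Set (Finset W)) (L : List (Finset W)) : Prop :=
  L.Nodup ∧ (∀ F, F ∈ L ↔ isFacet Δ F) ∧ ∀ i < L.length, ∃ R, IsRestriction L i R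

def Shellable (Δ : Set (Finset W)) : Prop := ∃ L, IsShelling Δ L

def IsRelRestriction (Sg : Set (Finset W)) (L : List (Finset W)) (i : ℕ) (R : Finset W) : Prop :=
  R ⊆ L.getD i ∅ ∧ R ∉ Sg ∧ (∀ j < i, ¬ R ⊆ L.getD j ∅) ∧
    ∀ G ⊆ L.getD i ∅, G ∉ Sg → (∀ j < i, ¬ G ⊆ L.getD j ∅) → R ⊆ G

/-- Shelling of the relative complex `(Δ, Sg)`. -/
def IsRelShelling (Δ Sg : Set (Finset W)) (L : List (Finset W)) : Prop :=
  L.Nodup ∧ (∀ F, F ∈ L ↔ (isFacet Δ F ∧ F ∉ Sg)) ∧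
    ∀ i < L.length, ∃ R, IsRelRestriction Sg L i R

/-- The facet of the `(d+1)`-simplex on `{0,…,d+1}` omitting vertex `i`. -/
def Gface (d i : ℕ) : Finset (V d) :=
  ((Finset.range (d+2)).filter (fun j => j ≠ i)).image (origV d)

def GammaC (d i : ℕ) : Set (Finset (V d)) := simplexOn (Gface d i)

def GammaU (d : ℕ) (I : Finset ℕ) : Set (Finset (V d)) := {F | ∃ i ∈ I, F ⊆ Gface d i}

/-- The face `F_i = {i+1,…,d+1}` subdivided by the diamond operation. -/
def Fsub (d i : ℕ) : Finset (V d) := (Finset.Ioc i (d+1)).image (origV d)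

/-- The diamond operation: successive stellar subdivisions at `F_0, F_1, …, F_d`
with new vertices `v_0,…,v_d` (subdivision at a non-face has no effect). -/
def Diam (d : ℕ) (Δ : Set (Finset (V d))) : Set (Finset (V d)) :=
  (List.range (d+1)).foldl (fun Γ i => sdC (newV d i) (Fsub d i) Γ) Δ

def DiamU (d : ℕ) (I : Finset ℕ) : Set (Finset (V d)) := Diam d (GammaU d I)

/-- Boundary complex of the cross-polytope on the vertex pairs `{j, v_j}`, `j ∈ S`. -/
def crossN (d : ℕ) (S : Finset ℕ) : Set (Finset (V d)) :=
  {F | (∀ x ∈ F, ∃ j ∈ S, x = origV d j ∨ x = newV d j) ∧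
       ∀ j ∈ S, ¬ (origV d j ∈ F ∧ newV d j ∈ F)}

/-- Boundary complex: generated by the faces of cardinality `n` contained in
exactly one facet. -/
def bdryC (n : ℕ) (Δ : Set (Finset W)) : Set (Finset W) :=
  {G | ∃ F, G ⊆ F ∧ F ∈ Δ ∧ F.card = n ∧ ∃! H, isFacet Δ H ∧ F ⊆ H}

/-- Positions in `P` at which `G` differs from the reference facet `F0`. -/
def diffSet (d : ℕ) (P : Finset ℕ) (F0 G : Finset (V d)) : Finset ℕ :=
  P.filter (fun j => decide (origV d j ∈ G) ≠ decide (origV d j ∈ F0))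

/-- Degree lexicographic comparison of characteristic (difference) sets. -/
def dlexLT (D D' : Finset ℕ) : Prop :=
  D.card < D'.card ∨
    (D.card = D'.card ∧ ∃ m, m ∉ D ∧ m ∈ D' ∧ ∀ j < m, (j ∈ D ↔ j ∈ D'))

/-- `L` lists the facets of `Δ` in degree lexicographic order w.r.t. `F0`. -/
def IsDegLexOrder (d : ℕ) (P : Finset ℕ) (Δ : Set (Finset (V d)))
    (F0 : Finset (V d)) (L : List (Finset (V d))) : Prop :=
  L.Nodup ∧ (∀ F, F ∈ L ↔ isFacet Δ F) ∧
    L.Pairwise (fun G G' => dlexLT (diffSet d P F0 G) (diffSet d P F0 G'))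

/-- Vertices of `F` sitting at the positions in `D`. -/
def posVerts (d : ℕ) (F : Finset (V d)) (D : Finset ℕ) : Finset (V d) :=
  F.filter (fun x => ∃ j ∈ D, x = origV d j ∨ x = newV d j)

def IsoN (Δ Γ : Set (Finset ℕ)) : Prop :=
  ∃ e : Equiv.Perm ℕ, ∀ F : Finset ℕ, F ∈ Δ ↔ F.image (⇑e) ∈ Γ

def StellarMove (Δ Γ : Set (Finset ℕ)) : Prop :=
  ∃ (F : Finset ℕ) (v : ℕ), F ∈ Δ ∧ F ≠ ∅ ∧ (∀ G ∈ Δ, v ∉ G) ∧ Γ = sdC v F Δ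

/-- PL homeomorphism of simplicial complexes, encoded via Alexander's theorem as
stellar equivalence: the equivalence relation generated by stellar subdivisions
(and their inverses, the welds) together with simplicial isomorphisms. -/
def PLHomeo (Δ Γ : Set (Finset ℕ)) : Prop :=
  Relation.EqvGen (fun A B => StellarMove A B ∨ IsoN A B) Δ Γ

def encV (d : ℕ) : V d → ℕ := Sum.elim (fun j => 2 * j.val) (fun j => 2 * j.val + 1)

def toN (d : ℕ) (Δ : Set (Finset (V d))) : Set (Finset ℕ) := mapC (encV d) Δ

def ballN (c : ℕ) : Set (Finset ℕ) := {F | F ⊆ Finset.range c}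

def sphereN (c : ℕ) : Set (Finset ℕ) := {F | F ⊂ Finset.range (c+1)}

/-- `Δ` is a combinatorial ball of dimension `c-1` (a `(c-1)`-simplex has `c` vertices). -/
def IsCombBall (d c : ℕ) (Δ : Set (Finset (V d))) : Prop := PLHomeo (toN d Δ) (ballN c)

/-- `Δ` is a combinatorial sphere of dimension `c-1`. -/
def IsCombSphere (d c : ℕ) (Δ : Set (Finset (V d))) : Prop := PLHomeo (toN d Δ) (sphereN c)

def ConnC (Δ : Set (Finset W)) : Prop :=
  ∀ u v : W, ({u} : Finset W) ∈ Δ → ({v} : Finset W) ∈ Δ →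
    Relation.ReflTransGen (fun a b => ({a, b} : Finset W) ∈ Δ) u v

/-- Combinatorial `d`-manifold (possibly with boundary): connected, pure, and all
links of nonempty faces are combinatorial balls or spheres of dimension `d - |F|`. -/
def IsCombManifold (d : ℕ) (Δ : Set (Finset (V d))) : Prop :=
  IsComplex Δ ∧ (∅ : Finset (V d)) ∈ Δ ∧ ConnC Δ ∧
  (∀ F ∈ Δ, ∃ G, isFacet Δ G ∧ F ⊆ G ∧ G.card = d+1) ∧
  ∀ F ∈ Δ, F ≠ (∅ : Finset (V d)) →
    (IsCombBall d (d+1-F.card) (lkC Δ F) ∨ IsCombSphere d (d+1-F.card) (lkC Δ F))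

def liftV (d : ℕ) : V d → V (d+1) := Sum.map Fin.castSucc Fin.castSucc

/-- The relabeling `π : i ↦ i+1`, `v_i ↦ v_{i+1}`. -/
def piV (d : ℕ) : V d → V (d+1) := Sum.map Fin.succ Fin.succ

/-- The relabeling `ρ : i ↦ i-1`, `v_i ↦ v_{i-1}` (indices mod `d+1`). -/
def rhoV (d : ℕ) : V d → V d := fun x =>
  match x with
  | Sum.inl j => origV d ((j.val + d) % (d+1))
  | Sum.inr j => newV d ((j.val + d) % (d+1))

/-- `ψ` swaps the vertices `d` and `v_d`. -/
def psiV (d : ℕ) : V d → V d := fun x => Equiv.swap (origV d d) (newV d d) x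

def sigmaV (d : ℕ) : V d → V d := psiV d ∘ rhoV d

/-- `Δ` is (isomorphic to) the boundary complex of the `(d+1)`-dimensional
cross-polytope. -/
def IsCrossBdry (d : ℕ) (Δ : Set (Finset W)) : Prop :=
  ∃ f : Fin (d+1) × Bool → W, Function.Injective f ∧
    Δ = {F | (∀ v ∈ F, ∃ p, v = f p) ∧
             ∀ j : Fin (d+1), ¬ (f (j, true) ∈ F ∧ f (j, false) ∈ F)}

/-- `Sg` is a connected sum of `Δ` and `Γ`: they meet exactly in the full simplex
on a common facet `F`, which is removed. -/
def IsConnSum (Δ Γ Sg : Set (Finset W)) : Prop :=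
  ∃ F : Finset W, isFacet Δ F ∧ isFacet Γ F ∧ Δ ∩ Γ = simplexOn F ∧ Sg = (Δ ∪ Γ) \ {F}

/-- Connected sum of `m+1` copies of the boundary of the `(d+1)`-cross-polytope. -/
def IsCrossStacked (d : ℕ) : ℕ → Set (Finset W) → Prop
  | 0, Δ => IsCrossBdry d Δ
  | (m+1), Δ => ∃ A B : Set (Finset W), IsCrossStacked d m A ∧ IsCrossBdry d B ∧ IsConnSum A B Δ

/-- The initial facet of the block `Diam(Γ_{iℓ})` (for block index `ℓ ≥ 1`;
block `0` uses the facet `G0` meeting the boundary). -/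
def initFacet (d i1 iℓ : ℕ) (G0 : Finset (V d)) (ℓ : ℕ) : Finset (V d) :=
  if ℓ = 0 then G0
  else ((Finset.range iℓ).image (origV d)) ∪ {newV d iℓ} ∪
       ((Finset.Ioo iℓ (max i1 iℓ)).image (origV d)) ∪
       ((Finset.Icc (max i1 iℓ) d).image (newV d))


/-! ### Auxiliary material for `stmt11` -/

/-- Cone over `Δ` with apex `v`, as a predicate on faces. -/
def coneP (v : W) (Δ : Set (Finset W)) : Set (Finset W) := {F | F.erase v ∈ Δ}

lemma joinC_eq_coneP (v : W) (Δ : Set (Finset W)) (hΔ : ∀ G ∈ Δ, v ∉ G) :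
    joinC (simplexOn {v}) Δ = coneP v Δ := by
  ext F
  constructor
  · rintro ⟨a, ha, b, hb, rfl⟩
    have hvb : v ∉ b := hΔ b hb
    have hE : (a ∪ b).erase v = b := by
      ext x
      simp only [Finset.mem_erase, Finset.mem_union]
      constructor
      · rintro ⟨hx, hx2 | hx2⟩
        · exact absurd (Finset.mem_singleton.mp (ha hx2)) hx
        · exact hx2
      · intro hx; exact ⟨fun h => hvb (h ▸ hx), Or.inr hx⟩
    show (a ∪ b).erase v ∈ Δ
    rw [hE]; exact hb
  · intro hF
    refine ⟨F ∩ {v}, Finset.inter_subset_right, F.erase v, hF, ?_⟩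
    ext x
    simp only [Finset.mem_union, Finset.mem_inter, Finset.mem_singleton, Finset.mem_erase]
    by_cases hx : x = v <;> by_cases hxF : x ∈ F <;> simp_all

lemma coneP_union (v : W) (A B : Set (Finset W)) :
    coneP v (A ∪ B) = coneP v A ∪ coneP v B := rfl

lemma delFace_coneP {v : W} {F : Finset W} (hvF : v ∉ F) (Δ : Set (Finset W)) :
    delFace (coneP v Δ) F = coneP v (delFace Δ F) := by
  ext H
  have hiff : F ⊆ H ↔ F ⊆ H.erase v := by
    constructor
    · intro h x hx; exact Finset.mem_erase.mpr ⟨fun e => hvF (e ▸ hx), h hx⟩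
    · intro h; exact h.trans (Finset.erase_subset _ _)
  show (H ∈ coneP v Δ ∧ ¬ F ⊆ H) ↔ (H.erase v ∈ Δ ∧ ¬ F ⊆ H.erase v)
  rw [hiff]; exact Iff.rfl

lemma lkC_coneP {v : W} {F : Finset W} (hvF : v ∉ F) (Δ : Set (Finset W)) :
    lkC (coneP v Δ) F = coneP v (lkC Δ F) := by
  ext H
  have h1 : Disjoint F H ↔ Disjoint F (H.erase v) := by
    constructor
    · intro h; exact h.mono_right (Finset.erase_subset _ _)
    · intro h
      rw [Finset.disjoint_left] at h ⊢
      intro x hxF hxH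
      exact h hxF (Finset.mem_erase.mpr ⟨fun e => hvF (e ▸ hxF), hxH⟩)
  have h2 : (F ∪ H).erase v = F ∪ H.erase v := by
    rw [Finset.erase_union_distrib, Finset.erase_eq_of_notMem hvF]
  show (Disjoint F H ∧ F ∪ H ∈ coneP v Δ) ↔ (Disjoint F (H.erase v) ∧ F ∪ H.erase v ∈ Δ)
  rw [h1]
  constructor
  · rintro ⟨hd, hu⟩; exact ⟨hd, by rwa [← h2]⟩
  · rintro ⟨hd, hu⟩; exact ⟨hd, show (F ∪ H).erase v ∈ Δ by rwa [h2]⟩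

lemma joinC_coneP (v : W) (A B : Set (Finset W)) (hA : ∀ a ∈ A, v ∉ a)
    (hB : ∀ b ∈ B, v ∉ b) :
    joinC A (coneP v B) = coneP v (joinC A B) := by
  ext s
  constructor
  · rintro ⟨a, ha, h, hh, rfl⟩
    refine ⟨a, ha, h.erase v, hh, ?_⟩
    rw [Finset.erase_union_distrib, Finset.erase_eq_of_notMem (hA a ha)]
  · rintro ⟨a, ha, b, hb, hs⟩
    refine ⟨a, ha, b ∪ s ∩ {v}, ?_, ?_⟩
    · show (b ∪ s ∩ {v}).erase v ∈ B
      have he : (s ∩ {v}).erase v = ∅ := by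
        ext x; simp only [Finset.mem_erase, Finset.mem_inter, Finset.mem_singleton,
          Finset.notMem_empty, iff_false]
        rintro ⟨hx, _, rfl⟩; exact hx rfl
      rw [Finset.erase_union_distrib, Finset.erase_eq_of_notMem (hB b hb), he,
        Finset.union_empty]
      exact hb
    · have : a ∪ (b ∪ s ∩ {v}) = (a ∪ b) ∪ s ∩ {v} := by
        rw [Finset.union_assoc]
      rw [this, ← hs]
      ext x
      simp only [Finset.mem_union, Finset.mem_erase, Finset.mem_inter, Finset.mem_singleton]
      by_cases hx : x = v <;> by_cases hxs : x ∈ s <;> simp_all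

lemma mapC_union (f : W → W') (A B : Set (Finset W)) :
    mapC f (A ∪ B) = mapC f A ∪ mapC f B := by
  ext F; constructor
  · rintro ⟨G, (h | h), rfl⟩
    exacts [Or.inl ⟨G, h, rfl⟩, Or.inr ⟨G, h, rfl⟩]
  · rintro (⟨G, h, rfl⟩ | ⟨G, h, rfl⟩)
    exacts [⟨G, Or.inl h, rfl⟩, ⟨G, Or.inr h, rfl⟩]

lemma mapC_joinC (f : W → W') (A B : Set (Finset W)) :
    mapC f (joinC A B) = joinC (mapC f A) (mapC f B) := by
  ext F; constructor
  · rintro ⟨G, ⟨a, ha, b, hb, rfl⟩, rfl⟩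
    exact ⟨a.image f, ⟨a, ha, rfl⟩, b.image f, ⟨b, hb, rfl⟩, Finset.image_union a b⟩
  · rintro ⟨x, ⟨a, ha, rfl⟩, y, ⟨b, hb, rfl⟩, rfl⟩
    exact ⟨a ∪ b, ⟨a, ha, b, hb, rfl⟩, (Finset.image_union a b).symm⟩

lemma mapC_delFace (f : W → W') (hf : Function.Injective f) (F : Finset W)
    (Δ : Set (Finset W)) :
    mapC f (delFace Δ F) = delFace (mapC f Δ) (F.image f) := by
  ext G; constructor
  · rintro ⟨H, ⟨hH, hFH⟩, rfl⟩
    exact ⟨⟨H, hH, rfl⟩, fun h => hFH ((Finset.image_subset_image_iff hf).mp h)⟩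
  · rintro ⟨⟨H, hH, rfl⟩, hFH⟩
    exact ⟨H, ⟨hH, fun h => hFH (Finset.image_subset_image h)⟩, rfl⟩

lemma mapC_lkC (f : W → W') (hf : Function.Injective f) (F : Finset W)
    (Δ : Set (Finset W)) :
    mapC f (lkC Δ F) = lkC (mapC f Δ) (F.image f) := by
  ext G; constructor
  · rintro ⟨H, ⟨hd, hu⟩, rfl⟩
    refine ⟨(Finset.disjoint_image hf).mpr hd, F ∪ H, hu, (Finset.image_union F H).symm⟩
  · rintro ⟨hd, K, hK, hu⟩
    have hG : G ⊆ K.image f := by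
      rw [← hu]; exact Finset.subset_union_right
    obtain ⟨G₀, hG₀, rfl⟩ := Finset.subset_image_iff.mp hG
    have hFK : F ⊆ K := by
      rw [← Finset.image_subset_image_iff hf, ← hu]; exact Finset.subset_union_left
    have hFG : F ∪ G₀ = K := by
      apply Finset.image_injective hf
      rw [Finset.image_union, ← hu]
    exact ⟨G₀, ⟨(Finset.disjoint_image hf).mp hd, hFG ▸ hK⟩, rfl⟩

lemma mapC_simplexOn_singleton (f : W → W') (v : W) :
    mapC f (simplexOn {v}) = simplexOn ({f v} : Finset W') := by
  have him : ({f v} : Finset W') = ({v} : Finset W).image f := by simp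
  ext G
  show (∃ H ∈ simplexOn {v}, G = H.image f) ↔ G ⊆ {f v}
  rw [him, Finset.subset_image_iff]
  constructor
  · rintro ⟨H, hH, rfl⟩; exact ⟨H, hH, rfl⟩
  · rintro ⟨H, hH, rfl⟩; exact ⟨H, hH, rfl⟩

lemma mapC_bdrySimplex (f : W → W') (hf : Function.Injective f) (F : Finset W) :
    mapC f (bdrySimplex F) = bdrySimplex (F.image f) := by
  ext G; constructor
  · rintro ⟨H, hH, rfl⟩
    exact (Finset.image_ssubset_image hf).mpr hH
  · intro hG
    obtain ⟨H, hH, rfl⟩ := Finset.subset_image_iff.mp hG.subset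
    exact ⟨H, (Finset.image_ssubset_image hf).mp hG, rfl⟩

lemma mapC_sdC (f : W → W') (hf : Function.Injective f) (v : W) (F : Finset W)
    (Δ : Set (Finset W)) :
    mapC f (sdC v F Δ) = sdC (f v) (F.image f) (mapC f Δ) := by
  unfold sdC
  rw [mapC_union, mapC_joinC, mapC_joinC, mapC_delFace f hf, mapC_lkC f hf,
    mapC_bdrySimplex f hf, mapC_simplexOn_singleton]

lemma sdC_coneP {v₀ v : W} {F : Finset W} (hv : v₀ ≠ v) (hvF : v₀ ∉ F)
    (Δ : Set (Finset W)) (hΔ : ∀ G ∈ Δ, v₀ ∉ G) :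
    sdC v F (coneP v₀ Δ) = coneP v₀ (sdC v F Δ) := by
  have hlk : ∀ b ∈ lkC Δ F, v₀ ∉ b := by
    rintro b ⟨hd, hu⟩ hb
    exact hΔ _ hu (Finset.mem_union_right _ hb)
  have hbd : ∀ a ∈ bdrySimplex F, v₀ ∉ a := by
    intro a ha hv₀
    have h2 : a ⊂ F := ha
    exact hvF (h2.subset hv₀)
  have hjoin : ∀ s ∈ joinC (bdrySimplex F) (lkC Δ F), v₀ ∉ s := by
    rintro s ⟨a, ha, b, hb, rfl⟩ hs
    rcases Finset.mem_union.mp hs with h | h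
    exacts [hbd a ha h, hlk b hb h]
  have hx : ∀ a ∈ simplexOn ({v} : Finset W), v₀ ∉ a := by
    intro a ha hv₀
    exact hv (Finset.mem_singleton.mp (ha hv₀))
  unfold sdC
  rw [delFace_coneP hvF, lkC_coneP hvF, joinC_coneP v₀ _ _ hbd hlk,
    joinC_coneP v₀ _ _ hx hjoin, coneP_union]

lemma sdC_nonface (v : W) (F : Finset W) (Δ : Set (Finset W)) (hc : IsComplex Δ)
    (hF : F ∉ Δ) : sdC v F Δ = Δ := by
  have h1 : delFace Δ F = Δ := by
    ext G; constructor
    · exact fun h => h.1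
    · intro hG; exact ⟨hG, fun hs => hF (hc G hG F hs)⟩
  have h2 : lkC Δ F = ∅ := by
    ext G; simp only [Set.mem_empty_iff_false, iff_false]
    rintro ⟨hd, hu⟩
    exact hF (hc _ hu F Finset.subset_union_left)
  have h3 : ∀ A : Set (Finset W), joinC A (∅ : Set (Finset W)) = ∅ := by
    intro A; ext s
    simp only [joinC, Set.mem_empty_iff_false, iff_false, Set.mem_setOf_eq]
    rintro ⟨a, _, b, hb, _⟩; exact hb
  unfold sdC
  rw [h1, h2, h3, h3, Set.union_empty]

lemma origV_eq (d m : ℕ) (h : m < d+2) : origV d m = Sum.inl ⟨m, h⟩ := by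
  simp [origV, Nat.mod_eq_of_lt h]

lemma newV_eq (d m : ℕ) (h : m < d+1) : newV d m = Sum.inr ⟨m, h⟩ := by
  simp [newV, Nat.mod_eq_of_lt h]

lemma origV_inj {d m m' : ℕ} (h : m < d+2) (h' : m' < d+2)
    (he : origV d m = origV d m') : m = m' := by
  rw [origV_eq d m h, origV_eq d m' h'] at he
  simpa using he

lemma piV_injective (d : ℕ) : Function.Injective (piV d) :=
  Function.Injective.sumMap (Fin.succ_injective _) (Fin.succ_injective _)

lemma piV_origV (d m : ℕ) (h : m < d+2) :
    piV d (origV d m) = origV (d+1) (m+1) := by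
  rw [origV_eq d m h, origV_eq (d+1) (m+1) (by omega)]
  simp [piV, Fin.succ]

lemma piV_newV (d m : ℕ) (h : m < d+1) :
    piV d (newV d m) = newV (d+1) (m+1) := by
  rw [newV_eq d m h, newV_eq (d+1) (m+1) (by omega)]
  simp [piV, Fin.succ]

lemma v0_not_image (d : ℕ) (G : Finset (V d)) :
    origV (d+1) 0 ∉ G.image (piV d) := by
  rw [origV_eq (d+1) 0 (by omega)]
  intro h
  obtain ⟨x, _, heq⟩ := Finset.mem_image.mp h
  cases x with
  | inl j =>
    simp only [piV, Sum.map_inl, Sum.inl.injEq] at heq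
    exact absurd (congrArg Fin.val heq) (by simp)
  | inr j => simp [piV] at heq

lemma mapC_piV_avoid (d : ℕ) (Δ : Set (Finset (V d))) :
    ∀ G ∈ mapC (piV d) Δ, origV (d+1) 0 ∉ G := by
  rintro G ⟨H, _, rfl⟩
  exact v0_not_image d H

lemma Fsub_succ (d i : ℕ) : Fsub (d+1) (i+1) = (Fsub d i).image (piV d) := by
  unfold Fsub
  rw [Finset.image_image]
  have h1 : Finset.Ioc (i+1) (d+1+1) = (Finset.Ioc i (d+1)).image (· + 1) := by
    ext m
    simp only [Finset.mem_Ioc, Finset.mem_image]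
    constructor
    · rintro ⟨h1, h2⟩; exact ⟨m - 1, ⟨by omega, by omega⟩, by omega⟩
    · rintro ⟨k, ⟨hk1, hk2⟩, rfl⟩; omega
  rw [h1, Finset.image_image]
  apply Finset.image_congr
  intro m hm
  simp only [Finset.coe_Ioc, Set.mem_Ioc] at hm
  simp only [Function.comp_apply]
  exact (piV_origV d m (by omega)).symm

lemma Gface_succ (d i : ℕ) (h : 1 ≤ i) :
    Gface (d+1) i = insert (origV (d+1) 0) ((Gface d (i-1)).image (piV d)) := by
  unfold Gface
  ext x
  simp only [Finset.mem_insert, Finset.mem_image, Finset.mem_filter, Finset.mem_range]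
  constructor
  · rintro ⟨m, ⟨hm, hmi⟩, rfl⟩
    rcases Nat.eq_zero_or_pos m with rfl | hm0
    · exact Or.inl rfl
    · refine Or.inr ⟨origV d (m-1), ⟨m-1, ⟨by omega, by omega⟩, rfl⟩, ?_⟩
      rw [piV_origV d (m-1) (by omega)]
      congr 1; omega
  · rintro (rfl | ⟨y, ⟨m, ⟨hm, hmi⟩, rfl⟩, rfl⟩)
    · exact ⟨0, ⟨by omega, by omega⟩, rfl⟩
    · exact ⟨m+1, ⟨by omega, by omega⟩, (piV_origV d m (by omega)).symm⟩

lemma GammaU_isComplex (d : ℕ) (I : Finset ℕ) : IsComplex (GammaU d I) := by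
  rintro F ⟨i, hi, hF⟩ G hG
  exact ⟨i, hi, hG.trans hF⟩

lemma Fsub0_not_mem (d : ℕ) (I : Finset ℕ) (hI : ∀ i ∈ I, i ≤ d+2) (h0 : 0 ∉ I) :
    Fsub (d+1) 0 ∉ GammaU (d+1) I := by
  rintro ⟨i, hi, hsub⟩
  have h1 : 1 ≤ i := Nat.one_le_iff_ne_zero.mpr (fun h => h0 (h ▸ hi))
  have h2 : i ≤ d+2 := hI i hi
  have hx : origV (d+1) i ∈ Fsub (d+1) 0 := by
    exact Finset.mem_image_of_mem _ (Finset.mem_Ioc.mpr ⟨by omega, by omega⟩)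
  have hmem := hsub hx
  simp only [Gface, Finset.mem_image, Finset.mem_filter, Finset.mem_range] at hmem
  obtain ⟨m, ⟨hm, hmi⟩, heq⟩ := hmem
  exact hmi (origV_inj (by omega) (by omega) heq)

lemma GammaU_cone (d : ℕ) (I : Finset ℕ) (h0 : 0 ∉ I) :
    GammaU (d+1) I = coneP (origV (d+1) 0) (mapC (piV d) (GammaU d (I.image (· - 1)))) := by
  ext F
  constructor
  · rintro ⟨i, hi, hF⟩
    have h1 : 1 ≤ i := Nat.one_le_iff_ne_zero.mpr (fun h => h0 (h ▸ hi))
    rw [Gface_succ d i h1] at hF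
    have h2 : F.erase (origV (d+1) 0) ⊆ (Gface d (i-1)).image (piV d) := by
      intro x hx
      rcases Finset.mem_insert.mp (hF (Finset.mem_of_mem_erase hx)) with h | h
      · exact absurd h (Finset.ne_of_mem_erase hx)
      · exact h
    obtain ⟨G, hG, hGe⟩ := Finset.subset_image_iff.mp h2
    exact ⟨G, ⟨i-1, Finset.mem_image_of_mem _ hi, hG⟩, hGe.symm⟩
  · rintro ⟨G, ⟨i', hi', hG⟩, hFe⟩
    obtain ⟨i, hi, rfl⟩ := Finset.mem_image.mp hi'
    have h1 : 1 ≤ i := Nat.one_le_iff_ne_zero.mpr (fun h => h0 (h ▸ hi))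
    refine ⟨i, hi, ?_⟩
    rw [Gface_succ d i h1]
    intro x hx
    by_cases hxv : x = origV (d+1) 0
    · exact Finset.mem_insert.mpr (Or.inl hxv)
    · refine Finset.mem_insert.mpr (Or.inr ?_)
      have : x ∈ F.erase (origV (d+1) 0) := Finset.mem_erase.mpr ⟨hxv, hx⟩
      rw [hFe] at this
      exact Finset.image_subset_image hG this

lemma fold_cone (d : ℕ) : ∀ (l : List ℕ), (∀ i ∈ l, i ≤ d) → ∀ Δ : Set (Finset (V d)),
    (l.map Nat.succ).foldl (fun Γ i => sdC (newV (d+1) i) (Fsub (d+1) i) Γ)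
      (coneP (origV (d+1) 0) (mapC (piV d) Δ)) =
    coneP (origV (d+1) 0) (mapC (piV d)
      (l.foldl (fun Γ i => sdC (newV d i) (Fsub d i) Γ) Δ))
  | [], _, Δ => rfl
  | (i :: l), h, Δ => by
    simp only [List.map_cons, List.foldl_cons]
    have hi : i ≤ d := h i List.mem_cons_self
    have hv : origV (d+1) 0 ≠ newV (d+1) (Nat.succ i) := by
      rw [origV_eq (d+1) 0 (by omega)]
      simp [newV]
    have hvF : origV (d+1) 0 ∉ Fsub (d+1) (Nat.succ i) := by
      rw [show Nat.succ i = i + 1 from rfl, Fsub_succ d i]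
      exact v0_not_image d _
    have hstep : sdC (newV (d+1) (Nat.succ i)) (Fsub (d+1) (Nat.succ i))
        (coneP (origV (d+1) 0) (mapC (piV d) Δ)) =
        coneP (origV (d+1) 0) (mapC (piV d) (sdC (newV d i) (Fsub d i) Δ)) := by
      rw [sdC_coneP hv hvF _ (mapC_piV_avoid d Δ),
        show Nat.succ i = i + 1 from rfl, Fsub_succ d i,
        ← piV_newV d i (by omega), mapC_sdC _ (piV_injective d)]
    rw [hstep, fold_cone d l (fun j hj => h j (List.mem_cons_of_mem _ hj)) _]

/-- (paper's dimension `d` rendered as `d+1`) if `0 ∉ I`, the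
diamond complex is a cone over the relabeled lower-dimensional one. -/
theorem stmt11 (d : ℕ) (I : Finset ℕ) (hI : ∀ i ∈ I, i ≤ d+1) (h0 : 0 ∉ I) :
    DiamU (d+1) I =
      joinC (simplexOn {origV (d+1) 0})
        (mapC (piV d) (DiamU d (I.image (· - 1)))) := by
  unfold DiamU Diam
  rw [List.range_succ_eq_map (n := d+1), List.foldl_cons]
  have hstep0 : sdC (newV (d+1) 0) (Fsub (d+1) 0) (GammaU (d+1) I) = GammaU (d+1) I :=
    sdC_nonface _ _ _ (GammaU_isComplex _ _)
      (Fsub0_not_mem d I (fun i hi => by have := hI i hi; omega) h0)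
  rw [hstep0, GammaU_cone d I h0,
    fold_cone d (List.range (d+1)) (fun i hi => by
      have := List.mem_range.mp hi; omega) (GammaU d (I.image (· - 1)))]
  exact (joinC_eq_coneP _ _ (mapC_piV_avoid d _)).symm

end Paper
end

section
/- Let $I\subseteq\{0,\ldots,d\}$ with $d\notin I$. Then $\Diamond^d(\Gamma^d_I)=\rho(\Diamond^d(\Gamma^d_{I+1}))\cup\sigma(\Diamond^d(\Gamma^d_{I+1}))$ with $\rho(\Diamond^d(\Gamma^d_{I+1}))\cap\sigma(\Diamond^d(\Gamma^d_{I+1}))=\Diamond^{d-1}(\Gamma^{d-1}_I)$; moreover $\rho(\Diamond^d(\Gamma^d_{I+1}))$ and $\sigma(\Diamond^d(\Gamma^d_{I+1}))$ are induced subcomplexes of $\Diamond^d(\Gamma^d_I)$. -/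
namespace Paper

variable {W : Type*} [DecidableEq W] {W' : Type*} [DecidableEq W']

/-! ### Auxiliary development -/

section Aux

lemma origV_eq_origV_iff {d a b : ℕ} (ha : a ≤ d+1) (hb : b ≤ d+1) :
    origV d a = origV d b ↔ a = b := by
  simp only [origV, Sum.inl.injEq, Fin.mk.injEq]
  rw [Nat.mod_eq_of_lt (by omega), Nat.mod_eq_of_lt (by omega)]

lemma newV_eq_newV_iff {d a b : ℕ} (ha : a ≤ d) (hb : b ≤ d) :
    newV d a = newV d b ↔ a = b := by
  simp only [newV, Sum.inr.injEq, Fin.mk.injEq]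
  rw [Nat.mod_eq_of_lt (by omega), Nat.mod_eq_of_lt (by omega)]

lemma origV_ne_newV {d a b : ℕ} : origV d a ≠ newV d b := by simp [origV, newV]

lemma newV_ne_origV {d a b : ℕ} : newV d a ≠ origV d b := by simp [origV, newV]

/-- Every vertex is an `origV` or a `newV` with bounded index. -/
lemma vertex_cases {d : ℕ} (x : V d) :
    (∃ a ≤ d+1, x = origV d a) ∨ (∃ a ≤ d, x = newV d a) := by
  rcases x with t | t
  · exact Or.inl ⟨t.val, by omega, by
      simp [origV, Nat.mod_eq_of_lt t.isLt]⟩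
  · exact Or.inr ⟨t.val, by omega, by
      simp [newV, Nat.mod_eq_of_lt t.isLt]⟩

/-- Explicit description of the complex obtained from `Γ_I` after stellar
subdivisions at `F_0, …, F_{k-1}`. -/
def PP (d k : ℕ) (I : Finset ℕ) (F : Finset (V d)) : Prop :=
  (∀ j ≤ d, newV d j ∈ F → j < k) ∧
  (∀ j ≤ d, ¬(origV d j ∈ F ∧ newV d j ∈ F)) ∧
  ((∃ i ∈ I, i < k ∧ origV d i ∉ F ∧ (∀ j < i, newV d j ∉ F) ∧
      ∃ m, k ≤ m ∧ m ≤ d+1 ∧ origV d m ∉ F) ∨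
   ((∀ j ≤ d, newV d j ∉ F) ∧ ∃ i ∈ I, k ≤ i ∧ i ≤ d+1 ∧ origV d i ∉ F))

lemma mem_Fsub_iff {d k : ℕ} {x : V d} :
    x ∈ Fsub d k ↔ ∃ m, k < m ∧ m ≤ d+1 ∧ x = origV d m := by
  simp only [Fsub, Finset.mem_image, Finset.mem_Ioc]
  constructor
  · rintro ⟨m, ⟨h1, h2⟩, rfl⟩; exact ⟨m, h1, h2, rfl⟩
  · rintro ⟨m, h1, h2, rfl⟩; exact ⟨m, ⟨h1, h2⟩, rfl⟩

lemma origV_mem_Fsub {d k m : ℕ} (hm : m ≤ d+1) :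
    origV d m ∈ Fsub d k ↔ k < m := by
  rw [mem_Fsub_iff]
  constructor
  · rintro ⟨p, h1, h2, hp⟩
    rw [origV_eq_origV_iff hm h2] at hp; omega
  · intro h; exact ⟨m, h, hm, rfl⟩

lemma newV_not_mem_Fsub {d k m : ℕ} : newV d m ∉ Fsub d k := by
  rw [mem_Fsub_iff]; rintro ⟨p, -, -, hp⟩; exact newV_ne_origV hp

lemma Fsub_subset_iff {d k : ℕ} {F : Finset (V d)} :
    Fsub d k ⊆ F ↔ ∀ m, k < m → m ≤ d+1 → origV d m ∈ F := by
  constructor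
  · intro h m h1 h2; exact h ((origV_mem_Fsub h2).2 h1)
  · intro h x hx
    rcases mem_Fsub_iff.1 hx with ⟨m, h1, h2, rfl⟩
    exact h m h1 h2

lemma mem_Gface_iff {d i : ℕ} (hi : i ≤ d+1) {x : V d} :
    x ∈ Gface d i ↔ ∃ m ≤ d+1, m ≠ i ∧ x = origV d m := by
  simp only [Gface, Finset.mem_image, Finset.mem_filter, Finset.mem_range]
  constructor
  · rintro ⟨m, ⟨h1, h2⟩, rfl⟩; exact ⟨m, by omega, h2, rfl⟩
  · rintro ⟨m, h1, h2, rfl⟩; exact ⟨m, ⟨by omega, h2⟩, rfl⟩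

/-- Base case of the master lemma. -/
lemma gammaU_eq_PP (d : ℕ) (I : Finset ℕ) (hI : ∀ i ∈ I, i ≤ d+1) :
    GammaU d I = {F | PP d 0 I F} := by
  ext F
  simp only [GammaU, Set.mem_setOf_eq, PP]
  constructor
  · rintro ⟨i, hiI, hsub⟩
    have hi := hI i hiI
    have hnonew : ∀ j ≤ d, newV d j ∉ F := by
      intro j hj hjF
      rcases (mem_Gface_iff hi).1 (hsub hjF) with ⟨m, -, -, hm⟩
      exact newV_ne_origV hm
    refine ⟨fun j hj hjF => absurd hjF (hnonew j hj), fun j hj h => hnonew j hj h.2,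
      Or.inr ⟨hnonew, i, hiI, Nat.zero_le i, hi, fun hiF => ?_⟩⟩
    rcases (mem_Gface_iff hi).1 (hsub hiF) with ⟨m, hm1, hm2, hm⟩
    exact hm2 ((origV_eq_origV_iff hm1 hi).1 hm.symm)
  · rintro ⟨h1, h2, h3⟩
    rcases h3 with ⟨i, -, hik, -⟩ | ⟨hnonew, i, hiI, -, hi, hiF⟩
    · omega
    refine ⟨i, hiI, fun x hx => ?_⟩
    rcases vertex_cases x with ⟨a, ha, rfl⟩ | ⟨a, ha, rfl⟩
    · refine (mem_Gface_iff hi).2 ⟨a, ha, fun h => ?_, rfl⟩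
      subst h; exact hiF hx
    · exact absurd hx (hnonew a ha)

/-- The key step: one stellar subdivision takes the stage-`k` description to the
stage-`k+1` description. -/
lemma step_lemma (d k : ℕ) (I : Finset ℕ) (hk : k ≤ d) (hI : ∀ i ∈ I, i ≤ d+1) :
    sdC (newV d k) (Fsub d k) {F | PP d k I F} = {F | PP d (k+1) I F} := by
  ext F
  simp only [sdC, delFace, joinC, lkC, simplexOn, bdrySimplex, Set.mem_union,
    Set.mem_setOf_eq, Set.mem_sep_iff]
  constructor
  · rintro (⟨⟨hC1, hC2, hbr⟩, hnsub⟩ | ⟨a, ha, s, ⟨b, hb, l, ⟨hdisj, hHPP⟩, rfl⟩, rfl⟩)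
    · -- delFace case
      have hm : ∃ m, k+1 ≤ m ∧ m ≤ d+1 ∧ origV d m ∉ F := by
        rw [Fsub_subset_iff] at hnsub
        push_neg at hnsub
        obtain ⟨m, h1, h2, h3⟩ := hnsub
        exact ⟨m, by omega, h2, h3⟩
      refine ⟨fun j hj hjF => by have := hC1 j hj hjF; omega, hC2, ?_⟩
      rcases hbr with ⟨i, hiI, hik, hiF, hji, -⟩ | ⟨hnonew, i, hiI, hki, hid, hiF⟩
      · exact Or.inl ⟨i, hiI, by omega, hiF, hji, hm⟩
      · rcases Nat.eq_or_lt_of_le hki with heq | hlt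
        · exact Or.inl ⟨i, hiI, by omega, hiF, fun j hj => hnonew j (by omega), hm⟩
        · exact Or.inr ⟨hnonew, i, hiI, by omega, hid, hiF⟩
    · -- join case: F = a ∪ (b ∪ l), a ⊆ {v_k}, b ⊊ Fsub, l ∈ lk
      have hane : ∀ x ∈ a, x = newV d k := fun x hx => Finset.mem_singleton.1 (ha hx)
      have hbmem : ∀ x ∈ b, ∃ m, k < m ∧ m ≤ d+1 ∧ x = origV d m := by
        intro x hx; exact mem_Fsub_iff.1 (hb.subset hx)
      have horigb : ∀ p, p ≤ d+1 → origV d p ∈ b → k < p := by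
        intro p hp hpb
        obtain ⟨m, h1, h2, he⟩ := hbmem _ hpb
        rw [origV_eq_origV_iff hp h2] at he; omega
      obtain ⟨hHC1, hHC2, hHbr⟩ := hHPP
      obtain ⟨x0, hx0F, hx0b⟩ := Finset.exists_of_ssubset hb
      obtain ⟨p0, hp01, hp02, rfl⟩ := mem_Fsub_iff.1 hx0F
      have hp0l : origV d p0 ∉ l := fun h =>
        (Finset.disjoint_left.1 hdisj) ((origV_mem_Fsub hp02).2 hp01) h
      -- extract structure of the link condition
      have hkey : origV d k ∉ Fsub d k ∪ l ∧
          ((∃ i ∈ I, i < k ∧ origV d i ∉ Fsub d k ∪ l ∧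
              ∀ j < i, newV d j ∉ Fsub d k ∪ l) ∨
           (k ∈ I ∧ ∀ j ≤ d, newV d j ∉ Fsub d k ∪ l)) := by
        rcases hHbr with ⟨i, hiI, hik, hiH, hjiH, m, hm1, hm2, hmH⟩ |
            ⟨hnonewH, i, hiI, hki, hid, hiH⟩
        · have hmk : m = k := by
            by_contra h
            exact hmH (Finset.mem_union_left _ ((origV_mem_Fsub hm2).2 (by omega)))
          subst hmk
          exact ⟨hmH, Or.inl ⟨i, hiI, hik, hiH, hjiH⟩⟩
        · have hik : i = k := by
            by_contra h
            exact hiH (Finset.mem_union_left _ ((origV_mem_Fsub hid).2 (by omega)))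
          subst hik
          exact ⟨hiH, Or.inr ⟨hiI, hnonewH⟩⟩
      refine ⟨?_, ?_, ?_⟩
      · -- C1
        intro j hj hjF
        rcases Finset.mem_union.1 hjF with hja | hjbl
        · have := (newV_eq_newV_iff hj hk).1 (hane _ hja); omega
        · rcases Finset.mem_union.1 hjbl with hjb | hjl
          · obtain ⟨m, -, -, he⟩ := hbmem _ hjb; exact absurd he newV_ne_origV
          · have := hHC1 j hj (Finset.mem_union_right _ hjl); omega
      · -- C2
        intro j hj ⟨hoF, hnF⟩
        rcases Finset.mem_union.1 hnF with hja | hjbl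
        · have hjk := (newV_eq_newV_iff hj hk).1 (hane _ hja)
          subst hjk
          rcases Finset.mem_union.1 hoF with hoa | hobl
          · exact origV_ne_newV (hane _ hoa)
          · rcases Finset.mem_union.1 hobl with hob | hol
            · exact absurd (horigb j (by omega) hob) (by omega)
            · exact hkey.1 (Finset.mem_union_right _ hol)
        · rcases Finset.mem_union.1 hjbl with hjb | hjl
          · obtain ⟨m, -, -, he⟩ := hbmem _ hjb; exact absurd he newV_ne_origV
          · have hjk := hHC1 j hj (Finset.mem_union_right _ hjl)
            rcases Finset.mem_union.1 hoF with hoa | hobl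
            · exact origV_ne_newV (hane _ hoa)
            · rcases Finset.mem_union.1 hobl with hob | hol
              · exact absurd (horigb j (by omega) hob) (by omega)
              · exact hHC2 j hj ⟨Finset.mem_union_right _ hol,
                  Finset.mem_union_right _ hjl⟩
      · -- branch
        have hnotF : ∀ p, p ≤ d+1 → origV d p ∉ Fsub d k ∪ l → p ≤ k → origV d p ∉
            a ∪ (b ∪ l) := by
          intro p hp hpH hpk hmem
          rcases Finset.mem_union.1 hmem with h1 | h2
          · exact origV_ne_newV (hane _ h1)
          · rcases Finset.mem_union.1 h2 with h3 | h4
            · exact absurd (horigb p hp h3) (by omega)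
            · exact hpH (Finset.mem_union_right _ h4)
        have hp0 : origV d p0 ∉ a ∪ (b ∪ l) := by
          intro hmem
          rcases Finset.mem_union.1 hmem with h1 | h2
          · exact origV_ne_newV (hane _ h1)
          · rcases Finset.mem_union.1 h2 with h3 | h4
            · exact hx0b h3
            · exact hp0l h4
        have hnew : ∀ j, j ≤ d → j ≠ k → newV d j ∉ Fsub d k ∪ l → newV d j ∉
            a ∪ (b ∪ l) := by
          intro j hj hjk hjH hmem
          rcases Finset.mem_union.1 hmem with h1 | h2
          · exact hjk ((newV_eq_newV_iff hj hk).1 (hane _ h1))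
          · rcases Finset.mem_union.1 h2 with h3 | h4
            · obtain ⟨m, -, -, he⟩ := hbmem _ h3; exact newV_ne_origV he
            · exact hjH (Finset.mem_union_right _ h4)
        rcases hkey.2 with ⟨i, hiI, hik, hiH, hjiH⟩ | ⟨hkI, hallH⟩
        · exact Or.inl ⟨i, hiI, by omega, hnotF i (by omega) hiH (by omega),
            fun j hj => hnew j (by omega) (by omega) (hjiH j hj),
            p0, by omega, hp02, hp0⟩
        · exact Or.inl ⟨k, hkI, by omega, hnotF k (by omega) hkey.1 le_rfl,
            fun j hj => hnew j (by omega) (by omega) (hallH j (by omega)),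
            p0, by omega, hp02, hp0⟩
  · rintro ⟨hC1, hC2, hbr⟩
    obtain ⟨m1, hm11, hm12, hm1F⟩ : ∃ m, k+1 ≤ m ∧ m ≤ d+1 ∧ origV d m ∉ F := by
      rcases hbr with ⟨i, -, -, -, -, m, hm1, hm2, hmF⟩ | ⟨-, i, -, hki, hid, hiF⟩
      exacts [⟨m, hm1, hm2, hmF⟩, ⟨i, hki, hid, hiF⟩]
    by_cases hvk : newV d k ∈ F
    · -- join case
      rcases hbr with ⟨i, hiI, hik1, hiF, hji, -⟩ | ⟨hnonew, -⟩
      swap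
      · exact absurd hvk (hnonew k hk)
      have hkF : origV d k ∉ F := fun h => hC2 k hk ⟨h, hvk⟩
      refine Or.inr ⟨{newV d k}, Finset.Subset.refl _,
        (F ∩ Fsub d k) ∪ (F \ insert (newV d k) (Fsub d k)),
        ⟨F ∩ Fsub d k, ?_, F \ insert (newV d k) (Fsub d k), ⟨?_, ?_, ?_, ?_⟩, rfl⟩, ?_⟩
      · -- b ⊊ Fsub
        refine (Finset.ssubset_iff_of_subset Finset.inter_subset_right).2
          ⟨origV d m1, (origV_mem_Fsub hm12).2 (by omega), fun h => hm1F (Finset.mem_inter.1 h).1⟩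
      · -- disjoint
        exact Finset.disjoint_left.2 fun {x} hx hy =>
          (Finset.mem_sdiff.1 hy).2 (Finset.mem_insert_of_mem hx)
      · -- C1 of H
        intro j hj hjH
        rcases Finset.mem_union.1 hjH with h1 | h2
        · exact absurd h1 newV_not_mem_Fsub
        · obtain ⟨hjF, hjni⟩ := Finset.mem_sdiff.1 h2
          have h3 := hC1 j hj hjF
          have h4 : j ≠ k := by
            intro h; subst h; exact hjni (Finset.mem_insert_self _ _)
          omega
      · -- C2 of H
        intro j hj ⟨ho, hn⟩
        rcases Finset.mem_union.1 hn with h1 | h2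
        · exact absurd h1 newV_not_mem_Fsub
        · obtain ⟨hnF, hjni⟩ := Finset.mem_sdiff.1 h2
          have h3 := hC1 j hj hnF
          have h4 : j ≠ k := by
            intro h; subst h; exact hjni (Finset.mem_insert_self _ _)
          rcases Finset.mem_union.1 ho with h5 | h6
          · have := (origV_mem_Fsub (by omega : j ≤ d+1)).1 h5; omega
          · exact hC2 j hj ⟨(Finset.mem_sdiff.1 h6).1, hnF⟩
      · -- branch of H
        have hkH : origV d k ∉ Fsub d k ∪ (F \ insert (newV d k) (Fsub d k)) := by
          intro h
          rcases Finset.mem_union.1 h with h1 | h2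
          · have := (origV_mem_Fsub (by omega : k ≤ d+1)).1 h1; omega
          · exact hkF (Finset.mem_sdiff.1 h2).1
        rcases Nat.lt_or_ge i k with hik | hik
        · refine Or.inl ⟨i, hiI, hik, ?_, ?_, k, le_rfl, by omega, hkH⟩
          · intro h
            rcases Finset.mem_union.1 h with h1 | h2
            · have := (origV_mem_Fsub (by omega : i ≤ d+1)).1 h1; omega
            · exact hiF (Finset.mem_sdiff.1 h2).1
          · intro j hj h
            rcases Finset.mem_union.1 h with h1 | h2
            · exact newV_not_mem_Fsub h1
            · exact hji j hj (Finset.mem_sdiff.1 h2).1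
        · have hik' : i = k := by omega
          subst hik'
          refine Or.inr ⟨?_, i, hiI, le_rfl, by omega, hkH⟩
          intro j hj h
          rcases Finset.mem_union.1 h with h1 | h2
          · exact newV_not_mem_Fsub h1
          · obtain ⟨hjF, hjni⟩ := Finset.mem_sdiff.1 h2
            have h3 := hC1 j hj hjF
            have h4 : j ≠ i := by
              intro h; subst h; exact hjni (Finset.mem_insert_self _ _)
            exact hji j (by omega) hjF
      · -- F = {v_k} ∪ (b ∪ l)
        ext x
        simp only [Finset.mem_union, Finset.mem_inter, Finset.mem_sdiff,
          Finset.mem_insert, Finset.mem_singleton]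
        constructor
        · intro hx
          by_cases hxv : x = newV d k
          · exact Or.inl hxv
          · by_cases hxs : x ∈ Fsub d k
            · exact Or.inr (Or.inl ⟨hx, hxs⟩)
            · exact Or.inr (Or.inr ⟨hx, fun h => h.elim hxv hxs⟩)
        · rintro (rfl | ⟨h, -⟩ | ⟨h, -⟩)
          exacts [hvk, h, h]
    · -- delFace case
      refine Or.inl ⟨⟨?_, hC2, ?_⟩, ?_⟩
      · intro j hj hjF
        have h1 := hC1 j hj hjF
        have h2 : j ≠ k := fun h => hvk (h ▸ hjF)
        omega
      · rcases hbr with ⟨i, hiI, hik1, hiF, hji, m, hm1, hm2, hmF⟩ |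
            ⟨hnonew, i, hiI, hki, hid, hiF⟩
        · rcases Nat.lt_or_ge i k with hik | hik
          · exact Or.inl ⟨i, hiI, hik, hiF, hji, m, by omega, hm2, hmF⟩
          · have hik' : i = k := by omega
            subst hik'
            refine Or.inr ⟨?_, i, hiI, le_rfl, by omega, hiF⟩
            intro j hj hjF
            have h1 := hC1 j hj hjF
            have h2 : j ≠ i := fun h => hvk (h ▸ hjF)
            exact hji j (by omega) hjF
        · exact Or.inr ⟨hnonew, i, hiI, by omega, hid, hiF⟩
      · intro hsub
        rw [Fsub_subset_iff] at hsub
        exact hm1F (hsub m1 (by omega) hm12)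

lemma diamU_eq_PP (d : ℕ) (I : Finset ℕ) (hI : ∀ i ∈ I, i ≤ d+1) :
    DiamU d I = {F | PP d (d+1) I F} := by
  have master : ∀ k, k ≤ d+1 →
      (List.range k).foldl (fun Γ i => sdC (newV d i) (Fsub d i) Γ) (GammaU d I)
        = {F | PP d k I F} := by
    intro k
    induction k with
    | zero => intro _; simpa using gammaU_eq_PP d I hI
    | succ n ih =>
      intro hn
      rw [List.range_succ, List.foldl_append, ih (by omega)]
      exact step_lemma d n I (by omega) hI
  exact master (d+1) le_rfl


/-! ### Value computations for the relabeling maps -/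

lemma mod_shift (a n : ℕ) (h1 : 1 ≤ a) (h2 : a ≤ n+1) : (a + n) % (n+1) = a - 1 := by
  rw [show a + n = (a-1) + (n+1) by omega, Nat.add_mod_right]
  exact Nat.mod_eq_of_lt (by omega)

lemma rho_origV (d a : ℕ) (ha : a ≤ d+2) :
    rhoV (d+1) (origV (d+1) a) = origV (d+1) ((a + (d+1)) % (d+2)) := by
  have h : origV (d+1) a = Sum.inl ⟨a, by omega⟩ := by
    simp [origV, Nat.mod_eq_of_lt (show a < d+3 by omega)]
  rw [h]; rfl

lemma rho_newV (d a : ℕ) (ha : a ≤ d+1) :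
    rhoV (d+1) (newV (d+1) a) = newV (d+1) ((a + (d+1)) % (d+2)) := by
  have h : newV (d+1) a = Sum.inr ⟨a, by omega⟩ := by
    simp [newV, Nat.mod_eq_of_lt (show a < d+2 by omega)]
  rw [h]; rfl

lemma rho_origV' (d a : ℕ) (h1 : 1 ≤ a) (h2 : a ≤ d+2) :
    rhoV (d+1) (origV (d+1) a) = origV (d+1) (a-1) := by
  rw [rho_origV d a h2, mod_shift a (d+1) h1 (by omega)]

lemma rho_origV0 (d : ℕ) : rhoV (d+1) (origV (d+1) 0) = origV (d+1) (d+1) := by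
  rw [rho_origV d 0 (by omega), Nat.zero_add, Nat.mod_eq_of_lt (by omega)]

lemma rho_newV' (d a : ℕ) (h1 : 1 ≤ a) (h2 : a ≤ d+1) :
    rhoV (d+1) (newV (d+1) a) = newV (d+1) (a-1) := by
  rw [rho_newV d a h2, mod_shift a (d+1) (by omega) (by omega)]

lemma rho_newV0 (d : ℕ) : rhoV (d+1) (newV (d+1) 0) = newV (d+1) (d+1) := by
  rw [rho_newV d 0 (by omega), Nat.zero_add, Nat.mod_eq_of_lt (by omega)]

lemma psi_fix (d : ℕ) {x : V (d+1)} (h1 : x ≠ origV (d+1) (d+1))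
    (h2 : x ≠ newV (d+1) (d+1)) : psiV (d+1) x = x :=
  Equiv.swap_apply_of_ne_of_ne h1 h2

lemma psi_orig_top (d : ℕ) :
    psiV (d+1) (origV (d+1) (d+1)) = newV (d+1) (d+1) :=
  Equiv.swap_apply_left _ _

lemma psi_new_top (d : ℕ) :
    psiV (d+1) (newV (d+1) (d+1)) = origV (d+1) (d+1) :=
  Equiv.swap_apply_right _ _

lemma sigma_origV' (d a : ℕ) (h1 : 1 ≤ a) (h2 : a ≤ d+1) :
    sigmaV (d+1) (origV (d+1) a) = origV (d+1) (a-1) := by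
  show psiV (d+1) (rhoV (d+1) _) = _
  rw [rho_origV' d a h1 (by omega)]
  refine psi_fix d (fun h => ?_) origV_ne_newV
  have := (origV_eq_origV_iff (by omega) (by omega)).1 h; omega

lemma sigma_origV0 (d : ℕ) : sigmaV (d+1) (origV (d+1) 0) = newV (d+1) (d+1) := by
  show psiV (d+1) (rhoV (d+1) _) = _
  rw [rho_origV0 d, psi_orig_top]

lemma sigma_origV_top (d : ℕ) :
    sigmaV (d+1) (origV (d+1) (d+2)) = newV (d+1) (d+1) := by
  show psiV (d+1) (rhoV (d+1) _) = _
  rw [rho_origV' d (d+2) (by omega) (by omega)]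
  have : d + 2 - 1 = d + 1 := by omega
  rw [this, psi_orig_top]

lemma sigma_newV' (d a : ℕ) (h1 : 1 ≤ a) (h2 : a ≤ d+1) :
    sigmaV (d+1) (newV (d+1) a) = newV (d+1) (a-1) := by
  show psiV (d+1) (rhoV (d+1) _) = _
  rw [rho_newV' d a h1 h2]
  refine psi_fix d newV_ne_origV (fun h => ?_)
  have := (newV_eq_newV_iff (by omega) (by omega)).1 h; omega

lemma sigma_newV0 (d : ℕ) : sigmaV (d+1) (newV (d+1) 0) = origV (d+1) (d+1) := by
  show psiV (d+1) (rhoV (d+1) _) = _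
  rw [rho_newV0 d, psi_new_top]

/-- Inverse of `ρ` on the relevant vertices. -/
def tauV (d : ℕ) : V (d+1) → V (d+1)
  | Sum.inl j => origV (d+1) ((j.val + 1) % (d+2))
  | Sum.inr j => newV (d+1) ((j.val + 1) % (d+2))

lemma tau_origV (d a : ℕ) (ha : a ≤ d+2) :
    tauV d (origV (d+1) a) = origV (d+1) ((a + 1) % (d+2)) := by
  have h : origV (d+1) a = Sum.inl ⟨a, by omega⟩ := by
    simp [origV, Nat.mod_eq_of_lt (show a < d+3 by omega)]
  rw [h]; rfl

lemma tau_newV (d a : ℕ) (ha : a ≤ d+1) :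
    tauV d (newV (d+1) a) = newV (d+1) ((a + 1) % (d+2)) := by
  have h : newV (d+1) a = Sum.inr ⟨a, by omega⟩ := by
    simp [newV, Nat.mod_eq_of_lt (show a < d+2 by omega)]
  rw [h]; rfl

lemma tau_origV' (d a : ℕ) (ha : a ≤ d) :
    tauV d (origV (d+1) a) = origV (d+1) (a+1) := by
  rw [tau_origV d a (by omega), Nat.mod_eq_of_lt (by omega)]

lemma tau_origV_top (d : ℕ) : tauV d (origV (d+1) (d+1)) = origV (d+1) 0 := by
  rw [tau_origV d (d+1) (by omega), show d+1+1 = d+2 from rfl, Nat.mod_self]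

lemma tau_newV' (d a : ℕ) (ha : a ≤ d) :
    tauV d (newV (d+1) a) = newV (d+1) (a+1) := by
  rw [tau_newV d a (by omega), Nat.mod_eq_of_lt (by omega)]

lemma tau_newV_top (d : ℕ) : tauV d (newV (d+1) (d+1)) = newV (d+1) 0 := by
  rw [tau_newV d (d+1) (by omega), show d+1+1 = d+2 from rfl, Nat.mod_self]

lemma rho_tau (d : ℕ) (x : V (d+1)) (hx : x ≠ origV (d+1) (d+2)) :
    rhoV (d+1) (tauV d x) = x := by
  rcases vertex_cases x with ⟨a, ha, rfl⟩ | ⟨a, ha, rfl⟩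
  · have ha' : a ≤ d+1 := by
      rcases Nat.lt_or_ge a (d+2) with h | h
      · omega
      · exact absurd ((origV_eq_origV_iff (by omega) (by omega)).2 (by omega)) hx
    rcases Nat.lt_or_ge a (d+1) with h | h
    · rw [tau_origV' d a (by omega), rho_origV' d (a+1) (by omega) (by omega)]
      simp
    · have : a = d+1 := by omega
      subst this
      rw [tau_origV_top, rho_origV0]
  · rcases Nat.lt_or_ge a (d+1) with h | h
    · rw [tau_newV' d a (by omega), rho_newV' d (a+1) (by omega) (by omega)]
      simp
    · have : a = d+1 := by omega
      subst this
      rw [tau_newV_top, rho_newV0]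

/-- Inverse of `σ` on the relevant vertices. -/
def upsV (d : ℕ) (x : V (d+1)) : V (d+1) := tauV d (psiV (d+1) x)

lemma sigma_ups (d : ℕ) (x : V (d+1)) (hx : x ≠ origV (d+1) (d+2)) :
    sigmaV (d+1) (upsV d x) = x := by
  show psiV (d+1) (rhoV (d+1) (tauV d (psiV (d+1) x))) = x
  rw [rho_tau d _ (fun h => ?_)]
  · show Equiv.swap _ _ (Equiv.swap _ _ x) = x
    exact Equiv.swap_apply_self _ _ x
  · apply hx
    have := congrArg (psiV (d+1)) h
    rw [show psiV (d+1) (psiV (d+1) x) = x from Equiv.swap_apply_self _ _ x] at this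
    rw [this, psi_fix d (fun h2 => ?_) origV_ne_newV]
    have := (origV_eq_origV_iff (by omega) (by omega)).1 h2; omega

lemma ups_origV' (d a : ℕ) (ha : a ≤ d) :
    upsV d (origV (d+1) a) = origV (d+1) (a+1) := by
  unfold upsV
  rw [psi_fix d (fun h => ?_) origV_ne_newV, tau_origV' d a ha]
  have := (origV_eq_origV_iff (by omega) (by omega)).1 h; omega

lemma ups_newV' (d a : ℕ) (ha : a ≤ d) :
    upsV d (newV (d+1) a) = newV (d+1) (a+1) := by
  unfold upsV
  rw [psi_fix d newV_ne_origV (fun h => ?_), tau_newV' d a ha]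
  have := (newV_eq_newV_iff (by omega) (by omega)).1 h; omega

lemma ups_newV_top (d : ℕ) : upsV d (newV (d+1) (d+1)) = origV (d+1) 0 := by
  unfold upsV
  rw [psi_new_top, tau_origV_top]

/-- lift and its inverse. -/
lemma lift_origV (d a : ℕ) (ha : a ≤ d+1) :
    liftV d (origV d a) = origV (d+1) a := by
  have h : origV d a = Sum.inl ⟨a, by omega⟩ := by
    simp [origV, Nat.mod_eq_of_lt (show a < d+2 by omega)]
  have h2 : origV (d+1) a = Sum.inl ⟨a, by omega⟩ := by
    simp [origV, Nat.mod_eq_of_lt (show a < d+3 by omega)]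
  rw [h, h2]; rfl

lemma lift_newV (d a : ℕ) (ha : a ≤ d) :
    liftV d (newV d a) = newV (d+1) a := by
  have h : newV d a = Sum.inr ⟨a, by omega⟩ := by
    simp [newV, Nat.mod_eq_of_lt (show a < d+1 by omega)]
  have h2 : newV (d+1) a = Sum.inr ⟨a, by omega⟩ := by
    simp [newV, Nat.mod_eq_of_lt (show a < d+2 by omega)]
  rw [h, h2]; rfl

def unliftV (d : ℕ) : V (d+1) → V d
  | Sum.inl j => origV d j.val
  | Sum.inr j => newV d j.val

lemma unlift_origV (d a : ℕ) (ha : a ≤ d+2) :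
    unliftV d (origV (d+1) a) = origV d a := by
  have h : origV (d+1) a = Sum.inl ⟨a, by omega⟩ := by
    simp [origV, Nat.mod_eq_of_lt (show a < d+3 by omega)]
  rw [h]; rfl

lemma unlift_newV (d a : ℕ) (ha : a ≤ d+1) :
    unliftV d (newV (d+1) a) = newV d a := by
  have h : newV (d+1) a = Sum.inr ⟨a, by omega⟩ := by
    simp [newV, Nat.mod_eq_of_lt (show a < d+2 by omega)]
  rw [h]; rfl

lemma lift_unlift (d : ℕ) (x : V (d+1)) (h1 : x ≠ origV (d+1) (d+2))
    (h2 : x ≠ newV (d+1) (d+1)) : liftV d (unliftV d x) = x := by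
  rcases vertex_cases x with ⟨a, ha, rfl⟩ | ⟨a, ha, rfl⟩
  · have ha' : a ≤ d+1 := by
      rcases Nat.lt_or_ge a (d+2) with h | h
      · omega
      · exact absurd ((origV_eq_origV_iff (by omega) (by omega)).2 (by omega)) h1
    rw [unlift_origV d a (by omega), lift_origV d a ha']
  · have ha' : a ≤ d := by
      rcases Nat.lt_or_ge a (d+1) with h | h
      · omega
      · exact absurd ((newV_eq_newV_iff (by omega) (by omega)).2 (by omega)) h2
    rw [unlift_newV d a (by omega), lift_newV d a ha']

/-! ### Clean description of `DiamU` -/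

def C2p (d : ℕ) (F : Finset (V d)) : Prop :=
  ∀ j ≤ d, ¬(origV d j ∈ F ∧ newV d j ∈ F)

def Rp (d : ℕ) (I : Finset ℕ) (F : Finset (V d)) : Prop :=
  ∃ i ∈ I, origV d i ∉ F ∧ ∀ j < i, newV d j ∉ F

lemma diamU_desc (d : ℕ) (I : Finset ℕ) (hI : ∀ i ∈ I, i ≤ d) :
    DiamU d I = {F | C2p d F ∧ origV d (d+1) ∉ F ∧ Rp d I F} := by
  rw [diamU_eq_PP d I (fun i hi => by have := hI i hi; omega)]
  ext F
  simp only [PP, Set.mem_setOf_eq, C2p, Rp]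
  constructor
  · rintro ⟨h1, h2, h3⟩
    rcases h3 with ⟨i, hiI, hik, hiF, hji, m, hm1, hm2, hmF⟩ |
        ⟨-, i, hiI, hki, -, -⟩
    · have : m = d+1 := by omega
      subst this
      exact ⟨h2, hmF, i, hiI, hiF, hji⟩
    · have := hI i hiI; omega
  · rintro ⟨h2, htop, i, hiI, hiF, hji⟩
    exact ⟨fun j hj _ => by omega, h2,
      Or.inl ⟨i, hiI, by have := hI i hiI; omega, hiF, hji, d+1, le_rfl, by omega, htop⟩⟩


/-! ### Characterizations of the mapped complexes -/

lemma map_rho (d : ℕ) (I : Finset ℕ) (hI : ∀ i ∈ I, i ≤ d) :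
    mapC (rhoV (d+1)) (DiamU (d+1) (I.image (· + 1))) =
      {G | C2p (d+1) G ∧ origV (d+1) (d+2) ∉ G ∧ newV (d+1) (d+1) ∉ G ∧
        Rp (d+1) I G} := by
  rw [diamU_desc (d+1) (I.image (· + 1)) (by
    intro i hi
    obtain ⟨j, hj, rfl⟩ := Finset.mem_image.1 hi
    have := hI j hj; omega)]
  ext G
  simp only [mapC, Set.mem_setOf_eq, C2p, Rp]
  constructor
  · rintro ⟨F, ⟨hC2, htop, hR⟩, rfl⟩
    obtain ⟨i', hi'I, hiF, hji⟩ := hR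
    obtain ⟨i, hiI, rfl⟩ := Finset.mem_image.1 hi'I
    have hid := hI i hiI
    have hpre_o : ∀ j, j ≤ d → origV (d+1) j ∈ F.image (rhoV (d+1)) →
        origV (d+1) (j+1) ∈ F := by
      intro j hj hjG
      obtain ⟨x, hxF, hx⟩ := Finset.mem_image.1 hjG
      rcases vertex_cases x with ⟨a, ha, rfl⟩ | ⟨a, ha, rfl⟩
      · by_cases h0 : a = 0
        · subst h0; rw [rho_origV0] at hx
          have := (origV_eq_origV_iff (by omega) (by omega)).1 hx; omega
        · rw [rho_origV' d a (by omega) ha] at hx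
          have h2 := (origV_eq_origV_iff (by omega) (by omega)).1 hx
          have h3 : a = j+1 := by omega
          rwa [h3] at hxF
      · by_cases h0 : a = 0
        · subst h0; rw [rho_newV0] at hx; exact absurd hx newV_ne_origV
        · rw [rho_newV' d a (by omega) ha] at hx; exact absurd hx newV_ne_origV
    have hpre_n : ∀ j, j ≤ d → newV (d+1) j ∈ F.image (rhoV (d+1)) →
        newV (d+1) (j+1) ∈ F := by
      intro j hj hjG
      obtain ⟨x, hxF, hx⟩ := Finset.mem_image.1 hjG
      rcases vertex_cases x with ⟨a, ha, rfl⟩ | ⟨a, ha, rfl⟩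
      · by_cases h0 : a = 0
        · subst h0; rw [rho_origV0] at hx; exact absurd hx origV_ne_newV
        · rw [rho_origV' d a (by omega) ha] at hx; exact absurd hx origV_ne_newV
      · by_cases h0 : a = 0
        · subst h0; rw [rho_newV0] at hx
          have := (newV_eq_newV_iff (by omega) (by omega)).1 hx; omega
        · rw [rho_newV' d a (by omega) ha] at hx
          have h2 := (newV_eq_newV_iff (by omega) (by omega)).1 hx
          have h3 : a = j+1 := by omega
          rwa [h3] at hxF
    have hpre_ntop : newV (d+1) (d+1) ∉ F.image (rhoV (d+1)) := by
      intro hjG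
      obtain ⟨x, hxF, hx⟩ := Finset.mem_image.1 hjG
      rcases vertex_cases x with ⟨a, ha, rfl⟩ | ⟨a, ha, rfl⟩
      · by_cases h0 : a = 0
        · subst h0; rw [rho_origV0] at hx; exact origV_ne_newV hx
        · rw [rho_origV' d a (by omega) ha] at hx; exact origV_ne_newV hx
      · by_cases h0 : a = 0
        · subst h0; rw [rho_newV0] at hx
          exact hji 0 (by omega) hxF
        · rw [rho_newV' d a (by omega) ha] at hx
          have := (newV_eq_newV_iff (by omega) (by omega)).1 hx; omega
    refine ⟨?_, ?_, hpre_ntop, i, hiI, ?_, ?_⟩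
    · intro j hj ⟨ho, hn⟩
      rcases Nat.lt_or_ge j (d+1) with h | h
      · exact hC2 (j+1) (by omega) ⟨hpre_o j (by omega) ho, hpre_n j (by omega) hn⟩
      · have : j = d+1 := by omega
        subst this; exact hpre_ntop hn
    · intro hjG
      obtain ⟨x, hxF, hx⟩ := Finset.mem_image.1 hjG
      rcases vertex_cases x with ⟨a, ha, rfl⟩ | ⟨a, ha, rfl⟩
      · by_cases h0 : a = 0
        · subst h0; rw [rho_origV0] at hx
          have := (origV_eq_origV_iff (by omega) (by omega)).1 hx; omega
        · rw [rho_origV' d a (by omega) ha] at hx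
          have := (origV_eq_origV_iff (by omega) (by omega)).1 hx; omega
      · by_cases h0 : a = 0
        · subst h0; rw [rho_newV0] at hx; exact newV_ne_origV hx
        · rw [rho_newV' d a (by omega) ha] at hx; exact newV_ne_origV hx
    · exact fun h => hiF (hpre_o i hid h)
    · exact fun j hj h => hji (j+1) (by omega) (hpre_n j (by omega) h)
  · rintro ⟨hC2, htop, hntop, i, hiI, hiF, hji⟩
    have hid := hI i hiI
    have hto : ∀ j, 1 ≤ j → j ≤ d+1 → origV (d+1) j ∈ G.image (tauV d) →
        origV (d+1) (j-1) ∈ G := by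
      intro j h1 h2 hjF
      obtain ⟨x, hxG, hx⟩ := Finset.mem_image.1 hjF
      rcases vertex_cases x with ⟨a, ha, rfl⟩ | ⟨a, ha, rfl⟩
      · by_cases hd2 : a = d+2
        · subst hd2; exact absurd hxG htop
        · rcases Nat.lt_or_ge a (d+1) with h | h
          · rw [tau_origV' d a (by omega)] at hx
            have h3 := (origV_eq_origV_iff (by omega) (by omega)).1 hx
            have h4 : a = j-1 := by omega
            rwa [h4] at hxG
          · have : a = d+1 := by omega
            subst this
            rw [tau_origV_top] at hx
            have := (origV_eq_origV_iff (by omega) (by omega)).1 hx; omega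
      · rw [tau_newV d a ha] at hx; exact absurd hx newV_ne_origV
    have htn : ∀ j, 1 ≤ j → j ≤ d+1 → newV (d+1) j ∈ G.image (tauV d) →
        newV (d+1) (j-1) ∈ G := by
      intro j h1 h2 hjF
      obtain ⟨x, hxG, hx⟩ := Finset.mem_image.1 hjF
      rcases vertex_cases x with ⟨a, ha, rfl⟩ | ⟨a, ha, rfl⟩
      · rw [tau_origV d a ha] at hx; exact absurd hx origV_ne_newV
      · rcases Nat.lt_or_ge a (d+1) with h | h
        · rw [tau_newV' d a (by omega)] at hx
          have h3 := (newV_eq_newV_iff (by omega) (by omega)).1 hx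
          have h4 : a = j-1 := by omega
          rwa [h4] at hxG
        · have : a = d+1 := by omega
          subst this
          rw [tau_newV_top] at hx
          have := (newV_eq_newV_iff (by omega) (by omega)).1 hx; omega
    have htn0 : newV (d+1) 0 ∉ G.image (tauV d) := by
      intro hjF
      obtain ⟨x, hxG, hx⟩ := Finset.mem_image.1 hjF
      rcases vertex_cases x with ⟨a, ha, rfl⟩ | ⟨a, ha, rfl⟩
      · rw [tau_origV d a ha] at hx; exact origV_ne_newV hx
      · rcases Nat.lt_or_ge a (d+1) with h | h
        · rw [tau_newV' d a (by omega)] at hx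
          have := (newV_eq_newV_iff (by omega) (by omega)).1 hx; omega
        · have : a = d+1 := by omega
          subst this
          exact hntop hxG
    refine ⟨G.image (tauV d), ⟨?_, ?_, ?_⟩, ?_⟩
    · intro j hj ⟨ho, hn⟩
      by_cases h0 : j = 0
      · subst h0; exact htn0 hn
      · exact hC2 (j-1) (by omega) ⟨hto j (by omega) hj ho, htn j (by omega) hj hn⟩
    · intro hjF
      obtain ⟨x, hxG, hx⟩ := Finset.mem_image.1 hjF
      rcases vertex_cases x with ⟨a, ha, rfl⟩ | ⟨a, ha, rfl⟩
      · rw [tau_origV d a ha] at hx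
        have h3 : (a+1) % (d+2) < d+2 := Nat.mod_lt _ (by omega)
        have h2 := (origV_eq_origV_iff (le_of_lt h3) (by omega)).1 hx
        omega
      · rw [tau_newV d a ha] at hx; exact newV_ne_origV hx
    · refine ⟨i+1, Finset.mem_image.2 ⟨i, hiI, rfl⟩, ?_, ?_⟩
      · intro h
        have h2 := hto (i+1) (by omega) (by omega) h
        rw [Nat.add_sub_cancel] at h2
        exact hiF h2
      · intro j hj h
        by_cases h0 : j = 0
        · subst h0; exact htn0 h
        · have h2 := htn j (by omega) (by omega) h
          exact hji (j-1) (by omega) h2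
    · have h1 : (G.image (tauV d)).image (rhoV (d+1)) = G := by
        rw [Finset.image_image]
        have h2 : G.image (rhoV (d+1) ∘ tauV d) = G.image id :=
          Finset.image_congr (fun x hx => rho_tau d x (fun h => htop (h ▸ hx)))
        rw [h2, Finset.image_id]
      exact h1.symm


lemma map_sigma (d : ℕ) (I : Finset ℕ) (hI : ∀ i ∈ I, i ≤ d) :
    mapC (sigmaV (d+1)) (DiamU (d+1) (I.image (· + 1))) =
      {G | C2p (d+1) G ∧ origV (d+1) (d+2) ∉ G ∧ origV (d+1) (d+1) ∉ G ∧
        Rp (d+1) I G} := by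
  rw [diamU_desc (d+1) (I.image (· + 1)) (by
    intro i hi
    obtain ⟨j, hj, rfl⟩ := Finset.mem_image.1 hi
    have := hI j hj; omega)]
  ext G
  simp only [mapC, Set.mem_setOf_eq, C2p, Rp]
  constructor
  · rintro ⟨F, ⟨hC2, htop, hR⟩, rfl⟩
    obtain ⟨i', hi'I, hiF, hji⟩ := hR
    obtain ⟨i, hiI, rfl⟩ := Finset.mem_image.1 hi'I
    have hid := hI i hiI
    have hpre_o : ∀ j, j ≤ d → origV (d+1) j ∈ F.image (sigmaV (d+1)) →
        origV (d+1) (j+1) ∈ F := by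
      intro j hj hjG
      obtain ⟨x, hxF, hx⟩ := Finset.mem_image.1 hjG
      rcases vertex_cases x with ⟨a, ha, rfl⟩ | ⟨a, ha, rfl⟩
      · by_cases h0 : a = 0
        · subst h0; rw [sigma_origV0] at hx; exact absurd hx newV_ne_origV
        · by_cases h2 : a = d+2
          · subst h2; rw [sigma_origV_top] at hx; exact absurd hx newV_ne_origV
          · rw [sigma_origV' d a (by omega) (by omega)] at hx
            have h3 := (origV_eq_origV_iff (by omega) (by omega)).1 hx
            have h4 : a = j+1 := by omega
            rwa [h4] at hxF
      · by_cases h0 : a = 0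
        · subst h0; rw [sigma_newV0] at hx
          have := (origV_eq_origV_iff (by omega) (by omega)).1 hx; omega
        · rw [sigma_newV' d a (by omega) ha] at hx; exact absurd hx newV_ne_origV
    have hpre_n : ∀ j, j ≤ d → newV (d+1) j ∈ F.image (sigmaV (d+1)) →
        newV (d+1) (j+1) ∈ F := by
      intro j hj hjG
      obtain ⟨x, hxF, hx⟩ := Finset.mem_image.1 hjG
      rcases vertex_cases x with ⟨a, ha, rfl⟩ | ⟨a, ha, rfl⟩
      · by_cases h0 : a = 0
        · subst h0; rw [sigma_origV0] at hx
          have := (newV_eq_newV_iff (by omega) (by omega)).1 hx; omega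
        · by_cases h2 : a = d+2
          · subst h2; rw [sigma_origV_top] at hx
            have := (newV_eq_newV_iff (by omega) (by omega)).1 hx; omega
          · rw [sigma_origV' d a (by omega) (by omega)] at hx
            exact absurd hx origV_ne_newV
      · by_cases h0 : a = 0
        · subst h0; rw [sigma_newV0] at hx; exact absurd hx origV_ne_newV
        · rw [sigma_newV' d a (by omega) ha] at hx
          have h3 := (newV_eq_newV_iff (by omega) (by omega)).1 hx
          have h4 : a = j+1 := by omega
          rwa [h4] at hxF
    have hotopG : origV (d+1) (d+1) ∉ F.image (sigmaV (d+1)) := by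
      intro hjG
      obtain ⟨x, hxF, hx⟩ := Finset.mem_image.1 hjG
      rcases vertex_cases x with ⟨a, ha, rfl⟩ | ⟨a, ha, rfl⟩
      · by_cases h0 : a = 0
        · subst h0; rw [sigma_origV0] at hx; exact newV_ne_origV hx
        · by_cases h2 : a = d+2
          · subst h2; rw [sigma_origV_top] at hx; exact newV_ne_origV hx
          · rw [sigma_origV' d a (by omega) (by omega)] at hx
            have := (origV_eq_origV_iff (by omega) (by omega)).1 hx; omega
      · by_cases h0 : a = 0
        · subst h0; exact hji 0 (by omega) hxF
        · rw [sigma_newV' d a (by omega) ha] at hx; exact newV_ne_origV hx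
    refine ⟨?_, ?_, hotopG, i, hiI, ?_, ?_⟩
    · intro j hj ⟨ho, hn⟩
      rcases Nat.lt_or_ge j (d+1) with h | h
      · exact hC2 (j+1) (by omega) ⟨hpre_o j (by omega) ho, hpre_n j (by omega) hn⟩
      · have : j = d+1 := by omega
        subst this; exact hotopG ho
    · intro hjG
      obtain ⟨x, hxF, hx⟩ := Finset.mem_image.1 hjG
      rcases vertex_cases x with ⟨a, ha, rfl⟩ | ⟨a, ha, rfl⟩
      · by_cases h0 : a = 0
        · subst h0; rw [sigma_origV0] at hx; exact newV_ne_origV hx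
        · by_cases h2 : a = d+2
          · subst h2; rw [sigma_origV_top] at hx; exact newV_ne_origV hx
          · rw [sigma_origV' d a (by omega) (by omega)] at hx
            have := (origV_eq_origV_iff (by omega) (by omega)).1 hx; omega
      · by_cases h0 : a = 0
        · subst h0; rw [sigma_newV0] at hx
          have := (origV_eq_origV_iff (by omega) (by omega)).1 hx; omega
        · rw [sigma_newV' d a (by omega) ha] at hx; exact newV_ne_origV hx
    · exact fun h => hiF (hpre_o i hid h)
    · exact fun j hj h => hji (j+1) (by omega) (hpre_n j (by omega) h)
  · rintro ⟨hC2, htop, hotopG, i, hiI, hiF, hji⟩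
    have hid := hI i hiI
    have huo : ∀ j, 1 ≤ j → j ≤ d+1 → origV (d+1) j ∈ G.image (upsV d) →
        origV (d+1) (j-1) ∈ G := by
      intro j h1 h2 hjF
      obtain ⟨x, hxG, hx⟩ := Finset.mem_image.1 hjF
      rcases vertex_cases x with ⟨a, ha, rfl⟩ | ⟨a, ha, rfl⟩
      · by_cases hc : a = d+2
        · subst hc; exact absurd hxG htop
        · by_cases hc1 : a = d+1
          · subst hc1; exact absurd hxG hotopG
          · rw [ups_origV' d a (by omega)] at hx
            have h3 := (origV_eq_origV_iff (by omega) (by omega)).1 hx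
            have h4 : a = j-1 := by omega
            rwa [h4] at hxG
      · by_cases hc : a = d+1
        · subst hc; rw [ups_newV_top] at hx
          have := (origV_eq_origV_iff (by omega) (by omega)).1 hx; omega
        · rw [ups_newV' d a (by omega)] at hx; exact absurd hx newV_ne_origV
    have hun : ∀ j, 1 ≤ j → j ≤ d+1 → newV (d+1) j ∈ G.image (upsV d) →
        newV (d+1) (j-1) ∈ G := by
      intro j h1 h2 hjF
      obtain ⟨x, hxG, hx⟩ := Finset.mem_image.1 hjF
      rcases vertex_cases x with ⟨a, ha, rfl⟩ | ⟨a, ha, rfl⟩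
      · by_cases hc : a = d+2
        · subst hc; exact absurd hxG htop
        · by_cases hc1 : a = d+1
          · subst hc1; exact absurd hxG hotopG
          · rw [ups_origV' d a (by omega)] at hx; exact absurd hx origV_ne_newV
      · by_cases hc : a = d+1
        · subst hc; rw [ups_newV_top] at hx; exact absurd hx origV_ne_newV
        · rw [ups_newV' d a (by omega)] at hx
          have h3 := (newV_eq_newV_iff (by omega) (by omega)).1 hx
          have h4 : a = j-1 := by omega
          rwa [h4] at hxG
    have hun0 : newV (d+1) 0 ∉ G.image (upsV d) := by
      intro hjF
      obtain ⟨x, hxG, hx⟩ := Finset.mem_image.1 hjF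
      rcases vertex_cases x with ⟨a, ha, rfl⟩ | ⟨a, ha, rfl⟩
      · by_cases hc : a = d+2
        · subst hc; exact absurd hxG htop
        · by_cases hc1 : a = d+1
          · subst hc1; exact absurd hxG hotopG
          · rw [ups_origV' d a (by omega)] at hx; exact origV_ne_newV hx
      · by_cases hc : a = d+1
        · subst hc; rw [ups_newV_top] at hx; exact origV_ne_newV hx
        · rw [ups_newV' d a (by omega)] at hx
          have := (newV_eq_newV_iff (by omega) (by omega)).1 hx; omega
    refine ⟨G.image (upsV d), ⟨?_, ?_, ?_⟩, ?_⟩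
    · intro j hj ⟨ho, hn⟩
      by_cases h0 : j = 0
      · subst h0; exact hun0 hn
      · exact hC2 (j-1) (by omega) ⟨huo j (by omega) hj ho, hun j (by omega) hj hn⟩
    · intro hjF
      obtain ⟨x, hxG, hx⟩ := Finset.mem_image.1 hjF
      rcases vertex_cases x with ⟨a, ha, rfl⟩ | ⟨a, ha, rfl⟩
      · by_cases hc : a = d+2
        · subst hc; exact absurd hxG htop
        · by_cases hc1 : a = d+1
          · subst hc1; exact absurd hxG hotopG
          · rw [ups_origV' d a (by omega)] at hx
            have := (origV_eq_origV_iff (by omega) (by omega)).1 hx; omega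
      · by_cases hc : a = d+1
        · subst hc; rw [ups_newV_top] at hx
          have := (origV_eq_origV_iff (by omega) (by omega)).1 hx; omega
        · rw [ups_newV' d a (by omega)] at hx; exact newV_ne_origV hx
    · refine ⟨i+1, Finset.mem_image.2 ⟨i, hiI, rfl⟩, ?_, ?_⟩
      · intro h
        have h2 := huo (i+1) (by omega) (by omega) h
        rw [Nat.add_sub_cancel] at h2
        exact hiF h2
      · intro j hj h
        by_cases h0 : j = 0
        · subst h0; exact hun0 h
        · exact hji (j-1) (by omega) (hun j (by omega) (by omega) h)
    · have h1 : (G.image (upsV d)).image (sigmaV (d+1)) = G := by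
        rw [Finset.image_image]
        have h2 : G.image (sigmaV (d+1) ∘ upsV d) = G.image id :=
          Finset.image_congr (fun x hx => sigma_ups d x (fun h => htop (h ▸ hx)))
        rw [h2, Finset.image_id]
      exact h1.symm

lemma map_lift (d : ℕ) (I : Finset ℕ) (hI : ∀ i ∈ I, i ≤ d) :
    mapC (liftV d) (DiamU d I) =
      {G | C2p (d+1) G ∧ origV (d+1) (d+2) ∉ G ∧ origV (d+1) (d+1) ∉ G ∧
        newV (d+1) (d+1) ∉ G ∧ Rp (d+1) I G} := by
  rw [diamU_desc d I hI]
  ext G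
  simp only [mapC, Set.mem_setOf_eq, C2p, Rp]
  constructor
  · rintro ⟨F, ⟨hC2, htop, i, hiI, hiF, hji⟩, rfl⟩
    have hid := hI i hiI
    have hlo : ∀ j, j ≤ d+1 → origV (d+1) j ∈ F.image (liftV d) →
        origV d j ∈ F := by
      intro j hj hjG
      obtain ⟨x, hxF, hx⟩ := Finset.mem_image.1 hjG
      rcases vertex_cases x with ⟨a, ha, rfl⟩ | ⟨a, ha, rfl⟩
      · rw [lift_origV d a ha] at hx
        have h3 := (origV_eq_origV_iff (by omega) (by omega)).1 hx
        rwa [h3] at hxF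
      · rw [lift_newV d a ha] at hx; exact absurd hx newV_ne_origV
    have hln : ∀ j, j ≤ d → newV (d+1) j ∈ F.image (liftV d) →
        newV d j ∈ F := by
      intro j hj hjG
      obtain ⟨x, hxF, hx⟩ := Finset.mem_image.1 hjG
      rcases vertex_cases x with ⟨a, ha, rfl⟩ | ⟨a, ha, rfl⟩
      · rw [lift_origV d a ha] at hx; exact absurd hx origV_ne_newV
      · rw [lift_newV d a ha] at hx
        have h3 := (newV_eq_newV_iff (by omega) (by omega)).1 hx
        rwa [h3] at hxF
    have hlntop : newV (d+1) (d+1) ∉ F.image (liftV d) := by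
      intro hjG
      obtain ⟨x, hxF, hx⟩ := Finset.mem_image.1 hjG
      rcases vertex_cases x with ⟨a, ha, rfl⟩ | ⟨a, ha, rfl⟩
      · rw [lift_origV d a ha] at hx; exact origV_ne_newV hx
      · rw [lift_newV d a ha] at hx
        have := (newV_eq_newV_iff (by omega) (by omega)).1 hx; omega
    refine ⟨?_, ?_, ?_, hlntop, i, hiI, ?_, ?_⟩
    · intro j hj ⟨ho, hn⟩
      rcases Nat.lt_or_ge j (d+1) with h | h
      · exact hC2 j (by omega) ⟨hlo j (by omega) ho, hln j (by omega) hn⟩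
      · have : j = d+1 := by omega
        subst this; exact hlntop hn
    · intro hjG
      obtain ⟨x, hxF, hx⟩ := Finset.mem_image.1 hjG
      rcases vertex_cases x with ⟨a, ha, rfl⟩ | ⟨a, ha, rfl⟩
      · rw [lift_origV d a ha] at hx
        have := (origV_eq_origV_iff (by omega) (by omega)).1 hx; omega
      · rw [lift_newV d a ha] at hx; exact newV_ne_origV hx
    · exact fun h => htop (hlo (d+1) le_rfl h)
    · exact fun h => hiF (hlo i (by omega) h)
    · exact fun j hj h => hji j hj (hln j (by omega) h)
  · rintro ⟨hC2, htop2, htop1, hntop, i, hiI, hiF, hji⟩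
    have hid := hI i hiI
    have huo : ∀ j, j ≤ d → origV d j ∈ G.image (unliftV d) →
        origV (d+1) j ∈ G := by
      intro j hj hjF
      obtain ⟨x, hxG, hx⟩ := Finset.mem_image.1 hjF
      rcases vertex_cases x with ⟨a, ha, rfl⟩ | ⟨a, ha, rfl⟩
      · by_cases hc : a = d+2
        · subst hc; exact absurd hxG htop2
        · by_cases hc1 : a = d+1
          · subst hc1; exact absurd hxG htop1
          · rw [unlift_origV d a ha] at hx
            have h3 := (origV_eq_origV_iff (by omega) (by omega)).1 hx
            rwa [← h3]
      · rw [unlift_newV d a ha] at hx; exact absurd hx newV_ne_origV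
    have hun : ∀ j, j ≤ d → newV d j ∈ G.image (unliftV d) →
        newV (d+1) j ∈ G := by
      intro j hj hjF
      obtain ⟨x, hxG, hx⟩ := Finset.mem_image.1 hjF
      rcases vertex_cases x with ⟨a, ha, rfl⟩ | ⟨a, ha, rfl⟩
      · rw [unlift_origV d a ha] at hx; exact absurd hx origV_ne_newV
      · by_cases hc : a = d+1
        · subst hc; exact absurd hxG hntop
        · rw [unlift_newV d a ha] at hx
          have h3 := (newV_eq_newV_iff (by omega) (by omega)).1 hx
          rwa [← h3]
    refine ⟨G.image (unliftV d), ⟨?_, ?_, i, hiI, ?_, ?_⟩, ?_⟩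
    · exact fun j hj h => hC2 j (by omega) ⟨huo j hj h.1, hun j hj h.2⟩
    · intro hjF
      obtain ⟨x, hxG, hx⟩ := Finset.mem_image.1 hjF
      rcases vertex_cases x with ⟨a, ha, rfl⟩ | ⟨a, ha, rfl⟩
      · by_cases hc : a = d+2
        · subst hc; exact absurd hxG htop2
        · by_cases hc1 : a = d+1
          · subst hc1; exact absurd hxG htop1
          · rw [unlift_origV d a ha] at hx
            have := (origV_eq_origV_iff (by omega) (by omega)).1 hx; omega
      · rw [unlift_newV d a ha] at hx; exact newV_ne_origV hx
    · exact fun h => hiF (huo i hid h)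
    · exact fun j hj h => hji j hj (hun j (by omega) h)
    · have h1 : (G.image (unliftV d)).image (liftV d) = G := by
        rw [Finset.image_image]
        have h2 : G.image (liftV d ∘ unliftV d) = G.image id :=
          Finset.image_congr (fun x hx =>
            lift_unlift d x (fun h => htop2 (h ▸ hx)) (fun h => hntop (h ▸ hx)))
        rw [h2, Finset.image_id]
      exact h1.symm

end Aux

/-- (paper's dimension `d` rendered as `d+1`) decomposition of
`⋄(Γ_I)` into two relabeled copies of `⋄(Γ_{I+1})`. -/
theorem stmt12 (d : ℕ) (I : Finset ℕ) (hI : ∀ i ∈ I, i ≤ d) :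
    DiamU (d+1) I =
        mapC (rhoV (d+1)) (DiamU (d+1) (I.image (· + 1))) ∪
          mapC (sigmaV (d+1)) (DiamU (d+1) (I.image (· + 1))) ∧
    mapC (rhoV (d+1)) (DiamU (d+1) (I.image (· + 1))) ∩
        mapC (sigmaV (d+1)) (DiamU (d+1) (I.image (· + 1))) =
      mapC (liftV d) (DiamU d I) ∧
    IsInduced (mapC (rhoV (d+1)) (DiamU (d+1) (I.image (· + 1)))) (DiamU (d+1) I) ∧
    IsInduced (mapC (sigmaV (d+1)) (DiamU (d+1) (I.image (· + 1)))) (DiamU (d+1) I) := by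
  have hI1 : ∀ i ∈ I, i ≤ d+1 := fun i hi => by have := hI i hi; omega
  rw [diamU_desc (d+1) I hI1, map_rho d I hI, map_sigma d I hI, map_lift d I hI]
  refine ⟨?_, ?_, ?_, ?_⟩
  · ext G
    simp only [Set.mem_union, Set.mem_setOf_eq]
    constructor
    · rintro ⟨hC2, htop, hR⟩
      by_cases h : newV (d+1) (d+1) ∈ G
      · exact Or.inr ⟨hC2, htop, fun h2 => hC2 (d+1) le_rfl ⟨h2, h⟩, hR⟩
      · exact Or.inl ⟨hC2, htop, h, hR⟩
    · rintro (⟨a, b, c, e⟩ | ⟨a, b, c, e⟩)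
      exacts [⟨a, b, e⟩, ⟨a, b, e⟩]
  · ext G
    simp only [Set.mem_inter_iff, Set.mem_setOf_eq]
    constructor
    · rintro ⟨⟨a, b, c, e⟩, ⟨-, -, c2, -⟩⟩
      exact ⟨a, b, c2, c, e⟩
    · rintro ⟨a, b, c1, c2, e⟩
      exact ⟨⟨a, b, c2, e⟩, ⟨a, b, c1, e⟩⟩
  · constructor
    · intro G hG
      exact ⟨hG.1, hG.2.1, hG.2.2.2⟩
    · intro F hF hv
      refine ⟨hF.1, hF.2.1, fun hmem => ?_, hF.2.2⟩
      exact (hv _ hmem).2.2.1 (Finset.mem_singleton_self _)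
  · constructor
    · intro G hG
      exact ⟨hG.1, hG.2.1, hG.2.2.2⟩
    · intro F hF hv
      refine ⟨hF.1, hF.2.1, fun hmem => ?_, hF.2.2⟩
      exact (hv _ hmem).2.2.1 (Finset.mem_singleton_self _)

end Paper
end
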